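/- Let 𝒜 = {a,b,c,d} and let ω^G be the Grigorchuk substitution sequence. Then for every x ∈ Z(ω^G,σ) and all positive integers m and p: if x(m) = x(m+p) = x(m+2p) = x(m+3p), then x(m+np) = x(m) for all n ≥ 1. -/
import Mathlib


/-- The four-letter alphabet 𝒜 = {a,b,c,d}. -/
inductive A : Type
  | a | b | c | d
  deriving DecidableEq

instance : TopologicalSpace A := ⊥
instance : DiscreteTopology A := ⟨rfl⟩

/-- The one-sided shift on sequences.  Sequences are 0-indexed here: index `n`
stands for position `n+1` of the paper's sequences `{1,2,3,…} → 𝒜`. -/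
def shift {𝒜 : Type*} (x : ℕ → 𝒜) : ℕ → 𝒜 := fun n => x (n + 1)

/-- `Z(ω,σ)`: the closure of the forward shift-orbit of `ω`. -/
def orbitClosure {𝒜 : Type*} [TopologicalSpace 𝒜] (ω : ℕ → 𝒜) : Set (ℕ → 𝒜) :=
  closure {y | ∃ n : ℕ, shift^[n] ω = y}

/-- The Grigorchuk substitution sequence `ω^G` (0-indexed: `omegaG n` is the letter at
position `m = n+1`).  Writing `m = 2^k(2l+1)`: the letter is `a` if `k = 0`, and for
`k ≥ 1` it is `d`, `c`, or `b` according as `k ≡ 0, 1, 2 (mod 3)`. -/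
def omegaG : ℕ → A := fun n =>
  if padicValNat 2 (n + 1) = 0 then A.a
  else if padicValNat 2 (n + 1) % 3 = 0 then A.d
  else if padicValNat 2 (n + 1) % 3 = 1 then A.c
  else A.b

local notation "V" => padicValNat 2

lemma letter_iff (x y : ℕ) : omegaG x = omegaG y ↔
    ((V (x+1) = 0 ↔ V (y+1) = 0) ∧ V (x+1) % 3 = V (y+1) % 3) := by
  simp only [omegaG]
  split_ifs <;> simp_all <;> try omega
  rw [padicValNat.eq_zero_of_not_dvd (by omega), padicValNat.eq_zero_of_not_dvd (by omega)]

lemma v2_add_eq {x y : ℕ} (hx : x ≠ 0) (hy : y ≠ 0) (h : V x < V y) :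
    V (x + y) = V x := by
  haveI : Fact (Nat.Prime 2) := ⟨Nat.prime_two⟩
  have hxy : x + y ≠ 0 := by omega
  have d1 : (2:ℕ) ^ V x ∣ x + y :=
    dvd_add pow_padicValNat_dvd ((pow_dvd_pow 2 h.le).trans pow_padicValNat_dvd)
  have d2 : ¬ (2:ℕ) ^ (V x + 1) ∣ x + y := by
    intro hd
    have hy' : (2:ℕ) ^ (V x + 1) ∣ y := (pow_dvd_pow 2 h).trans pow_padicValNat_dvd
    have : (2:ℕ) ^ (V x + 1) ∣ x := by
      have := Nat.dvd_sub hd hy'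
      simpa using this
    exact pow_succ_padicValNat_not_dvd hx this
  have l1 : V x ≤ V (x + y) := (padicValNat_dvd_iff_le hxy).mp d1
  have l2 : ¬ (V x + 1 ≤ V (x + y)) := fun hle => d2 ((padicValNat_dvd_iff_le hxy).mpr hle)
  omega

lemma v2_add_succ_le {x y : ℕ} (hx : x ≠ 0) (hy : y ≠ 0) (h : V x = V y) :
    V x + 1 ≤ V (x + y) := by
  haveI : Fact (Nat.Prime 2) := ⟨Nat.prime_two⟩
  obtain ⟨a, ha⟩ := (pow_padicValNat_dvd : (2:ℕ) ^ V x ∣ x)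
  obtain ⟨b, hb⟩ := (pow_padicValNat_dvd : (2:ℕ) ^ V y ∣ y)
  have hao : ¬ 2 ∣ a := by
    intro ⟨c, hc⟩
    refine pow_succ_padicValNat_not_dvd (p := 2) hx ⟨c, ?_⟩
    conv_lhs => rw [ha]
    rw [hc]; ring
  have hbo : ¬ 2 ∣ b := by
    intro ⟨c, hc⟩
    refine pow_succ_padicValNat_not_dvd (p := 2) hy ⟨c, ?_⟩
    conv_lhs => rw [hb]
    rw [hc]; ring
  have hd : (2:ℕ) ^ (V x + 1) ∣ x + y := by
    obtain ⟨c, hc⟩ : 2 ∣ a + b := by omega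
    refine ⟨c, ?_⟩
    conv_lhs => rw [ha, hb, ← h]
    rw [← Nat.mul_add, hc]; ring
  exact (padicValNat_dvd_iff_le (by omega)).mp hd

lemma omegaG_key (m p : ℕ) (hp : 0 < p)
    (h1 : omegaG (m + p) = omegaG m) (h2 : omegaG (m + 2*p) = omegaG m)
    (h3 : omegaG (m + 3*p) = omegaG m) :
    ∀ n : ℕ, 0 < n → omegaG (m + n * p) = omegaG m := by
  haveI : Fact (Nat.Prime 2) := ⟨Nat.prime_two⟩
  intro n hn
  rw [letter_iff] at h1 h2 h3 ⊢
  rw [show m + p + 1 = (m+1) + p by omega] at h1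
  rw [show m + 2*p + 1 = (m+1) + 2*p by omega] at h2
  rw [show m + 3*p + 1 = (m+1) + 3*p by omega] at h3
  rw [show m + n*p + 1 = (m+1) + n*p by omega]
  set M := m + 1 with hM
  have hM0 : M ≠ 0 := by omega
  have hp0 : p ≠ 0 := by omega
  by_cases hs : V M = 0
  · have hMp0 : V (M + p) = 0 := h1.1.mpr hs
    have hModd : ¬ 2 ∣ M := by rw [dvd_iff_padicValNat_ne_zero hM0]; simp [hs]
    have hMpodd : ¬ 2 ∣ (M + p) := by
      rw [dvd_iff_padicValNat_ne_zero (by omega)]; simp [hMp0]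
    have hpe : 2 ∣ p := by omega
    obtain ⟨q, hq⟩ := hpe.mul_left n
    have hodd : ¬ 2 ∣ (M + n * p) := by omega
    have h0 : V (M + n*p) = 0 := padicValNat.eq_zero_of_not_dvd hodd
    exact ⟨by simp [h0, hs], by rw [h0, hs]⟩
  · have hMe : 2 ∣ M := dvd_of_one_le_padicValNat (by omega)
    have hMp : V (M + p) ≠ 0 := fun h0 => hs (h1.1.mp h0)
    have hMpe : 2 ∣ M + p := dvd_of_one_le_padicValNat (by omega)
    have hpe : 2 ∣ p := (Nat.dvd_add_right hMe).mp hMpe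
    have ht : V p ≠ 0 := (dvd_iff_padicValNat_ne_zero hp0).mp hpe
    have h2p : V (2*p) = V p + 1 := by
      rw [padicValNat.mul (by norm_num) hp0, padicValNat_self]; omega
    rcases lt_or_ge (V M) (V p) with hst | hst
    · have hnp0 : n * p ≠ 0 := by positivity
      have hv : V M < V (n*p) := by
        rw [padicValNat.mul (by omega) hp0]; omega
      have hE := v2_add_eq hM0 hnp0 hv
      exact ⟨by simp [hE], by rw [hE]⟩
    · exfalso
      rcases eq_or_lt_of_le hst with heq | hlt
      · have hge : V M + 1 ≤ V (M + p) := by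
          have := v2_add_succ_le hM0 hp0 heq.symm
          omega
        have h13 := h1.2
        have hbig : V M + 3 ≤ V (M + p) := by omega
        have hE : V (2*p + (M + p)) = V (2*p) := by
          refine v2_add_eq (by omega) (by omega) ?_
          omega
        rw [show 2*p + (M+p) = M + 3*p by ring] at hE
        have := h3.2
        omega
      · have hMpv : V (M + p) = V p := by
          have := v2_add_eq hp0 hM0 hlt
          rwa [Nat.add_comm] at this
        have h13 := h1.2
        rcases lt_trichotomy (V p + 1) (V M) with h' | h' | h'
        · have hE : V (2*p + M) = V (2*p) := by
            refine v2_add_eq (by omega) hM0 ?_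
            omega
          rw [Nat.add_comm] at hE
          have := h2.2
          omega
        · omega
        · omega

lemma shift_iter {𝒜 : Type*} (ω : ℕ → 𝒜) (k n : ℕ) : shift^[k] ω n = ω (n + k) := by
  induction k generalizing ω n with
  | zero => rfl
  | succ k ih =>
    rw [Function.iterate_succ_apply, ih]
    simp [shift]
    ring_nf

/-- For every `x ∈ Z(ω^G,σ)` and all positive `p` (and every position `m`): if
`x(m) = x(m+p) = x(m+2p) = x(m+3p)` then `x(m+np) = x(m)` for all `n ≥ 1`. -/
theorem stmt5 :
    ∀ x ∈ orbitClosure omegaG, ∀ m p : ℕ, 0 < p →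
      x (m + p) = x m → x (m + 2 * p) = x m → x (m + 3 * p) = x m →
      ∀ n : ℕ, 0 < n → x (m + n * p) = x m := by
  intro x hx m p hp h1 h2 h3 n hn
  set s : Finset ℕ := {m, m + p, m + 2*p, m + 3*p, m + n*p} with hsdef
  set U : Set (ℕ → A) := {y | ∀ i ∈ s, y i = x i} with hUdef
  have hU : IsOpen U := by
    have : U = ⋂ i ∈ s, (fun y : ℕ → A => y i) ⁻¹' {x i} := by
      ext y; simp [hUdef, Set.mem_iInter]
    rw [this]
    exact isOpen_biInter_finset fun i _ =>
      (continuous_apply i).isOpen_preimage _ (isOpen_discrete _)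
  have hxU : x ∈ U := fun i _ => rfl
  obtain ⟨z, hzU, k, hk⟩ := mem_closure_iff.mp hx U hU hxU
  have agree : ∀ i ∈ s, omegaG (i + k) = x i := by
    intro i hi
    rw [← shift_iter omegaG k i, hk]
    exact hzU i hi
  have am : omegaG (m + k) = x m := agree m (by simp [hsdef])
  have a1 : omegaG ((m + p) + k) = x (m + p) := agree _ (by simp [hsdef])
  have a2 : omegaG ((m + 2*p) + k) = x (m + 2*p) := agree _ (by simp [hsdef])
  have a3 : omegaG ((m + 3*p) + k) = x (m + 3*p) := agree _ (by simp [hsdef])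
  have an : omegaG ((m + n*p) + k) = x (m + n*p) := agree _ (by simp [hsdef])
  have hkey := omegaG_key (m + k) p hp
    (by rw [show m + k + p = (m + p) + k by ring, a1, am, h1])
    (by rw [show m + k + 2*p = (m + 2*p) + k by ring, a2, am, h2])
    (by rw [show m + k + 3*p = (m + 3*p) + k by ring, a3, am, h3])
    n hn
  rw [show m + k + n*p = (m + n*p) + k by ring, an, am] at hkey
  exact hkey
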